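/- The minimum distance of the Berman code Ber_n^{r}(m) is 2^{r+1} for 0 ≤ r ≤ m−1, and the minimum distance of the Dual Berman code B_n^{r}(m) is n^{m−r} for 0 ≤ r ≤ m. -/

import Mathlib

open scoped BigOperators

/-- The `l`-th block (of length `n^m`) of a vector of length `n^(m+1)`,
where the first coordinate of the index tuple selects the block. -/
def blockAt (n m : ℕ) (l : Fin n) (v : (Fin (m + 1) → Fin n) → ZMod 2) :
    (Fin m → Fin n) → ZMod 2 :=
  fun j => v (Fin.cons l j)

/-- Berman code `Ber_n^r(m) ⊆ F_2^{n^m}`, coordinates indexed by `H^m` with `H = Fin n`.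
`Ber_n^m(m) = {0}`, `Ber_n^0(m)` is the single parity-check code, and for `1 ≤ r`,
a codeword is a concatenation `(v_0|…|v_{n-1})` with each block in `Ber_n^{r-1}(m-1)`
and the sum of the blocks in `Ber_n^r(m-1)`. -/
def Ber (n : ℕ) : ℕ → (m : ℕ) → Set ((Fin m → Fin n) → ZMod 2)
  | _, 0 => {0}
  | 0, (m + 1) => {c | ∑ i, c i = 0}
  | (r + 1), (m + 1) =>
      {v | (∀ l : Fin n, blockAt n m l v ∈ Ber n r m) ∧
        (fun j => ∑ l : Fin n, v (Fin.cons l j)) ∈ Ber n (r + 1) m}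

/-- Dual Berman code `B_n^r(m) ⊆ F_2^{n^m}`.
`B_n^m(m)` is the full space, `B_n^0(m)` is the repetition code, and for `1 ≤ r`,
a codeword is `(u+u_0|…|u+u_{n-2}|u)` with each `u_l ∈ B_n^{r-1}(m-1)` and `u ∈ B_n^r(m-1)`. -/
def DBer (n : ℕ) : ℕ → (m : ℕ) → Set ((Fin m → Fin n) → ZMod 2)
  | _, 0 => Set.univ
  | 0, (m + 1) => {c | ∃ a : ZMod 2, c = fun _ => a}
  | (r + 1), (m + 1) =>
      {v | ∃ u ∈ DBer n (r + 1) m, ∃ w : Fin n → ((Fin m → Fin n) → ZMod 2),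
        (∀ l, w l ∈ DBer n r m) ∧
        (∀ l : Fin n, blockAt n m l v = if l.val = n - 1 then u else u + w l)}

/-- Star product of two codes: the span of all coordinatewise products. -/
def starProd {ι : Type*} (C D : Set (ι → ZMod 2)) : Submodule (ZMod 2) (ι → ZMod 2) :=
  Submodule.span (ZMod 2) {x | ∃ c ∈ C, ∃ d ∈ D, x = c * d}

/-- Dual code w.r.t. the standard bilinear form. -/
def dualCode {ι : Type*} [Fintype ι] (C : Set (ι → ZMod 2)) : Set (ι → ZMod 2) :=
  {x | ∀ c ∈ C, ∑ i, x i * c i = 0}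

/-- Partial order on tuples: `j ⪯ i` iff `supp(j) ⊆ supp(i)` and `j` agrees with `i` on
`supp(j)`. -/
def preceq {n m : ℕ} (j i : Fin m → Fin n) : Prop :=
  ∀ s, (j s).val ≠ 0 → j s = i s

instance {n m : ℕ} (j i : Fin m → Fin n) : Decidable (preceq j i) := by
  unfold preceq; infer_instance

/-- Hamming weight of a tuple in `H^m`: the number of nonzero entries. -/
def tupleWt {n m : ℕ} (j : Fin m → Fin n) : ℕ :=
  (Finset.univ.filter fun s => (j s).val ≠ 0).card

/-- The vector `c_m(i')`, the indicator of `{i : i ⪯ i'}`. -/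
def cm {n m : ℕ} (i' : Fin m → Fin n) : (Fin m → Fin n) → ZMod 2 :=
  fun i => if preceq i i' then 1 else 0

/-- The vector `d_m(i')`, the indicator of `{i : i ⪰ i'}`. -/
def dm {n m : ℕ} (i' : Fin m → Fin n) : (Fin m → Fin n) → ZMod 2 :=
  fun i => if preceq i' i then 1 else 0

/-- Standard basis vector of `F_2^{n^m}` at coordinate `v`. -/
def eVec {n m : ℕ} (v : Fin m → Fin n) : (Fin m → Fin n) → ZMod 2 :=
  fun i => if i = v then 1 else 0

section stmt7Aux
set_option linter.unusedSectionVars false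
variable {n m : ℕ} {ι : Type*} [Fintype ι] [DecidableEq ι]

lemma sum_cast_wt (c : ι → ZMod 2) : ∑ i, c i = (hammingNorm c : ZMod 2) := by
  unfold hammingNorm
  rw [← Finset.sum_boole]
  refine Finset.sum_congr rfl fun i _ => ?_
  rcases (by decide : ∀ x : ZMod 2, x = 0 ∨ x = 1) (c i) with h | h <;> simp [h]

lemma wt_blocks (v : (Fin (m + 1) → Fin n) → ZMod 2) :
    hammingNorm v = ∑ l, hammingNorm (blockAt n m l v) := by
  unfold hammingNorm blockAt
  simp only [Finset.card_filter]
  rw [← Fintype.sum_equiv (Fin.consEquiv (fun _ => Fin n))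
    (fun p => if v (Fin.cons p.1 p.2) ≠ 0 then 1 else 0)
    (fun i => if v i ≠ 0 then 1 else 0) (fun p => rfl)]
  rw [Fintype.sum_prod_type]

lemma wtAddLe (a b : ι → ZMod 2) :
    hammingNorm (a + b) ≤ hammingNorm a + hammingNorm b := by
  have h := hammingDist_triangle (a + b) b (0 : ι → ZMod 2)
  rw [hammingDist_zero_right, hammingDist_zero_right, hammingDist_eq_hammingNorm] at h
  simpa [show -a = a from funext fun i => (by decide : ∀ x : ZMod 2, -x = x) (a i)] using h

lemma wtSumLe (f : Fin n → ι → ZMod 2) (s : Finset (Fin n)) :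
    hammingNorm (∑ l ∈ s, f l) ≤ ∑ l ∈ s, hammingNorm (f l) := by
  classical
  induction s using Finset.induction with
  | empty => simp
  | @insert a s ha ih =>
      rw [Finset.sum_insert ha, Finset.sum_insert ha]
      exact (wtAddLe _ _).trans (by omega)

lemma blockAt_mk (f : Fin n → (Fin m → Fin n) → ZMod 2) (l : Fin n) :
    blockAt n m l (fun i => f (i 0) (fun s => i s.succ)) = f l := by
  funext j
  simp [blockAt, Fin.cons]

lemma eq_zero_of_blocks (v : (Fin (m + 1) → Fin n) → ZMod 2)
    (h : ∀ l, blockAt n m l v = 0) : v = 0 := by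
  funext i
  have := congrFun (h (i 0)) (Fin.tail i)
  simpa [blockAt, Fin.cons_self_tail] using this

lemma wt_indicator (s : Finset ι) :
    hammingNorm (fun i => if i ∈ s then (1 : ZMod 2) else 0) = s.card := by
  unfold hammingNorm
  congr 1
  ext i
  by_cases h : i ∈ s <;> simp [h]

lemma zero_mem_Ber (n : ℕ) : ∀ r m, (0 : (Fin m → Fin n) → ZMod 2) ∈ Ber n r m := by
  intro r m
  induction m generalizing r with
  | zero => cases r <;> simp [Ber]
  | succ m ih =>
    cases r with
    | zero => simp [Ber]
    | succ r =>
      refine ⟨fun l => ?_, ?_⟩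
      · have : blockAt n m l (0 : (Fin (m+1) → Fin n) → ZMod 2) = 0 := by
          funext j; simp [blockAt]
        rw [this]; exact ih r
      · have : (fun j => ∑ l : Fin n, (0 : (Fin (m+1) → Fin n) → ZMod 2) (Fin.cons l j))
            = (0 : (Fin m → Fin n) → ZMod 2) := by funext j; simp
        rw [this]; exact ih (r+1)

lemma zero_mem_DBer (n : ℕ) : ∀ r m, (0 : (Fin m → Fin n) → ZMod 2) ∈ DBer n r m := by
  intro r m
  induction m generalizing r with
  | zero => cases r <;> simp [DBer]
  | succ m ih =>
    cases r with
    | zero => exact ⟨0, rfl⟩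
    | succ r =>
      refine ⟨0, ih (r+1), fun _ => 0, fun _ => ih r, fun l => ?_⟩
      funext j
      by_cases h : l.val = n - 1 <;> simp [blockAt, h]

lemma Ber_high (n : ℕ) : ∀ r m, m ≤ r → ∀ c ∈ Ber n r m, c = 0 := by
  intro r m
  induction m generalizing r with
  | zero => intro _ c hc; cases r <;> simpa [Ber] using hc
  | succ m ih =>
    intro hmr c hc
    cases r with
    | zero => omega
    | succ r =>
      funext i
      have h := ih r (by omega) _ (hc.1 (i 0))
      have := congrFun h (Fin.tail i)
      simpa [blockAt, Fin.cons_self_tail] using this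

end stmt7Aux
/-- `d_min(Ber_n^r(m)) = 2^{r+1}` for `0 ≤ r ≤ m-1`, and
`d_min(B_n^r(m)) = n^{m-r}` for `0 ≤ r ≤ m`; the minimum distance being the least Hamming
weight of a nonzero codeword. -/
theorem stmt7 (n m : ℕ) (hn : 2 ≤ n) :
    (∀ r < m,
      (∃ c ∈ Ber n r m, c ≠ 0 ∧ hammingNorm c = 2 ^ (r + 1)) ∧
      ∀ c ∈ Ber n r m, c ≠ 0 → 2 ^ (r + 1) ≤ hammingNorm c) ∧
    (∀ r ≤ m,
      (∃ c ∈ DBer n r m, c ≠ 0 ∧ hammingNorm c = n ^ (m - r)) ∧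
      ∀ c ∈ DBer n r m, c ≠ 0 → n ^ (m - r) ≤ hammingNorm c) := by
  classical
  have hz2 : ∀ a b : ZMod 2, b = a + b + a := by decide
  have hzone : ∀ a : ZMod 2, a ≠ 0 → a = 1 := by decide
  have hzself : ∀ a : ZMod 2, a + a = 0 := by decide
  induction m with
  | zero =>
    refine ⟨fun r hr => absurd hr (by omega), fun r hr => ?_⟩
    have hr0 : r = 0 := by omega
    subst hr0
    constructor
    · refine ⟨fun i => if i ∈ (Finset.univ : Finset (Fin 0 → Fin n)) then (1 : ZMod 2) else 0,
        by simp [DBer], ?_, ?_⟩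
      · intro h
        have h2 := congrFun h (fun i => i.elim0)
        rw [if_pos (Finset.mem_univ _)] at h2
        exact one_ne_zero h2
      · rw [wt_indicator, Finset.card_univ, Fintype.card_fun]
        simp
    · intro c _ hc0
      have h1 : 0 < hammingNorm c := hammingNorm_pos_iff.2 hc0
      rw [Nat.sub_self, pow_zero]
      exact h1
  | succ m ih =>
    obtain ⟨ihB, ihD⟩ := ih
    constructor
    · -- Berman codes at m + 1
      intro r hr
      cases r with
      | zero =>
        -- single parity check code, min distance 2
        constructor
        · set a : Fin (m+1) → Fin n := fun _ => ⟨0, by omega⟩ with ha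
          set b : Fin (m+1) → Fin n := fun _ => ⟨1, by omega⟩ with hb
          have hab : a ≠ b := by
            intro h
            have := congrFun h 0
            simp [ha, hb, Fin.ext_iff] at this
          set c : (Fin (m+1) → Fin n) → ZMod 2 :=
            fun i => if i ∈ ({a, b} : Finset (Fin (m+1) → Fin n)) then (1 : ZMod 2) else 0 with hcdef
          have hwt : hammingNorm c = 2 := by
            rw [hcdef, wt_indicator, Finset.card_pair hab]
          refine ⟨c, ?_, ?_, by rw [hwt]; norm_num⟩
          · show ∑ i, c i = 0
            rw [sum_cast_wt, hwt]
            decide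
          · intro h
            rw [h, hammingNorm_zero] at hwt
            exact absurd hwt (by omega)
        · intro c hc hc0
          have h1 : 0 < hammingNorm c := hammingNorm_pos_iff.2 hc0
          have hsum : ∑ i, c i = 0 := hc
          rw [sum_cast_wt] at hsum
          have h2 : 2 ∣ hammingNorm c := by
            rwa [ZMod.natCast_eq_zero_iff] at hsum
          obtain ⟨k, hk⟩ := h2
          omega
      | succ r =>
        have hrm : r < m := by omega
        constructor
        · -- existence of a weight 2^(r+2) codeword
          obtain ⟨c, hc, hc0, hwc⟩ := (ihB r hrm).1
          set f : Fin n → (Fin m → Fin n) → ZMod 2 :=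
            fun l => if l.val ≤ 1 then c else 0 with hf
          set v : (Fin (m+1) → Fin n) → ZMod 2 :=
            fun i => f (i 0) (fun s => i s.succ) with hv
          have hblv : ∀ l, blockAt n m l v = f l := fun l => blockAt_mk f l
          have hwtf : ∀ l, hammingNorm (f l) = if l.val ≤ 1 then 2 ^ (r + 1) else 0 := by
            intro l
            rw [hf]
            by_cases h : l.val ≤ 1 <;> simp [h, hwc]
          have hfilter : (Finset.univ.filter fun l : Fin n => l.val ≤ 1)
              = {(⟨0, by omega⟩ : Fin n), ⟨1, by omega⟩} := by
            ext l
            simp [Fin.ext_iff]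
            omega
          have hcard2 : (Finset.univ.filter fun l : Fin n => l.val ≤ 1).card = 2 := by
            rw [hfilter]
            exact Finset.card_pair (by simp [Fin.ext_iff])
          have hwtv : hammingNorm v = 2 ^ (r + 1 + 1) := by
            rw [wt_blocks v]
            simp only [hblv, hwtf]
            rw [Finset.sum_ite, Finset.sum_const, Finset.sum_const_zero, hcard2,
              smul_eq_mul, pow_succ]
            omega
          refine ⟨v, ⟨fun l => ?_, ?_⟩, ?_, hwtv⟩
          · rw [hblv l, hf]
            by_cases h : l.val ≤ 1 <;> simp only [h, if_true, if_false]
            · exact hc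
            · exact zero_mem_Ber n r m
          · have : (fun j => ∑ l : Fin n, v (Fin.cons l j)) = 0 := by
              funext j
              have : ∀ l : Fin n, v (Fin.cons l j) = if l.val ≤ 1 then c j else 0 := by
                intro l
                have h2 : v (Fin.cons l j) = f l j := congrFun (hblv l) j
                rw [h2]
                by_cases h : l.val ≤ 1
                · rw [if_pos h]
                  have h4 : f l = c := by simp only [hf]; exact if_pos h
                  rw [h4]
                · rw [if_neg h]
                  have h4 : f l = 0 := by simp only [hf]; exact if_neg h
                  rw [h4]
                  rfl
              simp only [this]
              rw [Finset.sum_ite, Finset.sum_const, Finset.sum_const_zero, hcard2]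
              simp only [add_zero, two_nsmul, hzself, Pi.zero_apply]
            rw [this]
            exact zero_mem_Ber n (r+1) m
          · intro h
            rw [h, hammingNorm_zero] at hwtv
            have : 0 < 2 ^ (r + 1 + 1) := Nat.pow_pos (by omega)
            omega
        · -- lower bound 2^(r+2)
          intro v hv hv0
          obtain ⟨hbl, hsum⟩ := hv
          set s : (Fin m → Fin n) → ZMod 2 := fun j => ∑ l : Fin n, v (Fin.cons l j) with hs
          have hsblocks : s = ∑ l : Fin n, blockAt n m l v := by
            funext j
            rw [Finset.sum_apply]
            rfl
          by_cases hs0 : s = 0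
          · -- at least two nonzero blocks
            have hexl : ∃ l, blockAt n m l v ≠ 0 := by
              by_contra h
              push_neg at h
              exact hv0 (eq_zero_of_blocks v h)
            obtain ⟨l0, hl0⟩ := hexl
            have hexl1 : ∃ l1, l1 ≠ l0 ∧ blockAt n m l1 v ≠ 0 := by
              by_contra h
              push_neg at h
              have : s = blockAt n m l0 v := by
                rw [hsblocks]
                rw [Finset.sum_eq_single l0]
                · intro b _ hb
                  exact h b hb
                · intro hb
                  exact absurd (Finset.mem_univ l0) hb
              rw [hs0] at this
              exact hl0 this.symm
            obtain ⟨l1, hl10, hl1⟩ := hexl1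
            have hb0 := (ihB r hrm).2 _ (hbl l0) hl0
            have hb1 := (ihB r hrm).2 _ (hbl l1) hl1
            have hsub : ({l1, l0} : Finset (Fin n)) ⊆ Finset.univ := Finset.subset_univ _
            have hle : ∑ l ∈ ({l1, l0} : Finset (Fin n)), hammingNorm (blockAt n m l v)
                ≤ ∑ l : Fin n, hammingNorm (blockAt n m l v) :=
              Finset.sum_le_sum_of_subset hsub
            rw [Finset.sum_pair hl10] at hle
            rw [wt_blocks v]
            have : 2 ^ (r + 1 + 1) = 2 ^ (r + 1) + 2 ^ (r + 1) := by
              rw [pow_succ]; omega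
            omega
          · -- the sum of blocks is a nonzero codeword of Ber n (r+1) m
            have hrm1 : r + 1 ≤ m := by omega
            rcases Nat.lt_or_ge (r+1) m with h | h
            · have hws := (ihB (r+1) h).2 s hsum hs0
              have hle : hammingNorm s ≤ ∑ l : Fin n, hammingNorm (blockAt n m l v) := by
                rw [hsblocks]
                exact wtSumLe _ _
              rw [wt_blocks v]
              omega
            · exfalso
              exact hs0 (Ber_high n (r+1) m (by omega) s hsum)
    · -- Dual Berman codes at m + 1
      intro r hr
      cases r with
      | zero =>
        constructor
        · refine ⟨fun i => if i ∈ (Finset.univ : Finset (Fin (m+1) → Fin n)) then (1 : ZMod 2) else 0,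
            ⟨1, by funext i; simp⟩, ?_, ?_⟩
          · intro h
            have := congrFun h (fun _ => ⟨0, by omega⟩)
            simp at this
          · rw [wt_indicator, Finset.card_univ, Fintype.card_fun]
            simp
        · intro c hc hc0
          obtain ⟨a, rfl⟩ := hc
          have ha : a ≠ 0 := by
            intro h
            apply hc0
            funext i
            simp [h]
          have ha1 : a = 1 := hzone a ha
          subst ha1
          have : (fun _ : Fin (m+1) → Fin n => (1 : ZMod 2))
              = fun i => if i ∈ (Finset.univ : Finset (Fin (m+1) → Fin n)) then (1 : ZMod 2) else 0 := by
            funext i; simp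
          rw [this, wt_indicator, Finset.card_univ, Fintype.card_fun]
          simp
      | succ r =>
        have hrm : r ≤ m := by omega
        constructor
        · -- existence of a weight n^(m-r) codeword
          obtain ⟨c, hc, hc0, hwc⟩ := (ihD r hrm).1
          set a0 : Fin n := ⟨0, by omega⟩ with ha0
          set f : Fin n → (Fin m → Fin n) → ZMod 2 :=
            fun l => if l = a0 then c else 0 with hf
          set v : (Fin (m+1) → Fin n) → ZMod 2 :=
            fun i => f (i 0) (fun s => i s.succ) with hv
          have hblv : ∀ l, blockAt n m l v = f l := fun l => blockAt_mk f l
          have hmem : v ∈ DBer n (r+1) (m+1) := by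
            refine ⟨0, zero_mem_DBer n (r+1) m, f, fun l => ?_, fun l => ?_⟩
            · rw [hf]
              by_cases h : l = a0 <;> simp only [h, if_true, if_false]
              · exact hc
              · exact zero_mem_DBer n r m
            · rw [hblv l]
              by_cases h : l.val = n - 1 <;> simp only [h, if_true, if_false]
              · have : l ≠ a0 := by
                  intro he
                  rw [he, ha0] at h
                  simp at h
                  omega
                rw [hf]
                simp [this]
              · rw [zero_add]
          have hwtv : hammingNorm v = n ^ (m - r) := by
            rw [wt_blocks v]
            simp only [hblv]
            have : ∀ l, hammingNorm (f l) = if l = a0 then n ^ (m - r) else 0 := by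
              intro l
              rw [hf]
              by_cases h : l = a0 <;> simp [h, hwc]
            simp only [this]
            rw [Finset.sum_ite_eq' Finset.univ a0 (fun _ => n ^ (m - r))]
            simp
          have hexp : m + 1 - (r + 1) = m - r := by omega
          refine ⟨v, hmem, ?_, by rw [hwtv, hexp]⟩
          · intro h
            rw [h, hammingNorm_zero] at hwtv
            have : 0 < n ^ (m - r) := Nat.pow_pos (by omega)
            omega
        · -- lower bound n^(m-r)
          intro v hv hv0
          have hexp : m + 1 - (r + 1) = m - r := by omega
          rw [hexp]
          obtain ⟨u, hu, w, hw, hblk⟩ := hv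
          rcases Nat.lt_or_ge r m with hlt | hge
          · by_cases hwz : ∀ l : Fin n, l.val ≠ n - 1 → w l = 0
            · -- all blocks equal u
              have hbu : ∀ l, blockAt n m l v = u := by
                intro l
                rw [hblk l]
                by_cases h : l.val = n - 1
                · simp [h]
                · rw [if_neg h, hwz l h, add_zero]
              have hu0 : u ≠ 0 := by
                intro h
                apply hv0
                apply eq_zero_of_blocks
                intro l
                rw [hbu l, h]
              have hwu := (ihD (r+1) (by omega)).2 u hu hu0
              rw [wt_blocks v]
              simp only [hbu]
              rw [Finset.sum_const, Finset.card_univ, Fintype.card_fin, smul_eq_mul]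
              calc n ^ (m - r) = n ^ (m - (r+1)) * n := by
                    rw [← pow_succ]
                    congr 1
                    omega
                _ ≤ hammingNorm u * n := Nat.mul_le_mul_right n hwu
                _ ≤ n * hammingNorm u := by rw [Nat.mul_comm]
            · push_neg at hwz
              obtain ⟨l0, hl0ne, hl0⟩ := hwz
              set llast : Fin n := ⟨n - 1, by omega⟩ with hllast
              have hne : l0 ≠ llast := by
                intro h
                apply hl0ne
                rw [h, hllast]
              have hbl0 : blockAt n m l0 v = u + w l0 := by
                rw [hblk l0, if_neg hl0ne]
              have hbllast : blockAt n m llast v = u := by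
                rw [hblk llast, if_pos]
                rw [hllast]
              have hwl0 := (ihD r hrm).2 (w l0) (hw l0) hl0
              have htri : hammingNorm (w l0) ≤ hammingNorm (u + w l0) + hammingNorm u := by
                have heq : w l0 = (u + w l0) + u := by
                  funext i
                  exact hz2 (u i) (w l0 i)
                calc hammingNorm (w l0) = hammingNorm ((u + w l0) + u) := by rw [← heq]
                  _ ≤ hammingNorm (u + w l0) + hammingNorm u := wtAddLe _ _
              have hsub : ({l0, llast} : Finset (Fin n)) ⊆ Finset.univ := Finset.subset_univ _
              have hle : ∑ l ∈ ({l0, llast} : Finset (Fin n)), hammingNorm (blockAt n m l v)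
                  ≤ ∑ l : Fin n, hammingNorm (blockAt n m l v) :=
                Finset.sum_le_sum_of_subset hsub
              rw [Finset.sum_pair hne, hbl0, hbllast] at hle
              rw [wt_blocks v]
              omega
          · -- r = m : trivial bound 1
            have hrm' : r = m := by omega
            subst hrm'
            rw [Nat.sub_self, pow_zero]
            exact hammingNorm_pos_iff.2 hv0
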